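/- arXiv:2602.07583 — 3 statements merged into one kernel-verified Lean document; each statement's English description precedes it below -/
import Mathlib

section
/- Let n, k, l, p, q be integers satisfying 1 ≤ l < k ≤ n and 1 ≤ q ≤ p ≤ n. Then (n - 2(p - q))·(k + l) + 2(p² - q²) - n ≥ 0. -/
theorem integer_inequality (n k l p q : ℤ)
    (hl : 1 ≤ l) (hlk : l < k) (hkn : k ≤ n)
    (hq : 1 ≤ q) (hqp : q ≤ p) (hpn : p ≤ n) :
    (n - 2 * (p - q)) * (k + l) + 2 * (p ^ 2 - q ^ 2) - n ≥ 0 := by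
  rcases le_or_gt (k + l) (p + q) with h | h
  · nlinarith [mul_nonneg (by linarith : (0:ℤ) ≤ p - q) (by linarith : (0:ℤ) ≤ p + q - k - l)]
  · nlinarith [mul_nonneg (by linarith : (0:ℤ) ≤ n - p) (by linarith : (0:ℤ) ≤ k + l - p - q),
      mul_nonneg (by linarith : (0:ℤ) ≤ n - k) (by linarith : (0:ℤ) ≤ p - q),
      mul_nonneg (by linarith : (0:ℤ) ≤ q - 1) (by linarith : (0:ℤ) ≤ k + l - p - q),
      mul_nonneg (by linarith : (0:ℤ) ≤ q - 1) (by linarith : (0:ℤ) ≤ p - q),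
      mul_nonneg (by linarith : (0:ℤ) ≤ p - q) (by linarith : (0:ℤ) ≤ k + l - p - q),
      sq_nonneg (k + l - p - q - (p - q)), sq_nonneg (p - q)]
end

section
/- Fix natural numbers n, k, p. For tuples i, j : Fin m → Fin n, let δ(i, j) denote the determinant of the m×m integer matrix whose (a, b) entry is 1 if i(a) = j(b) and 0 otherwise. Then for all i, j : Fin k → Fin n, the p-fold contraction identity holds: ∑_{t : Fin p → Fin n} δ(append(t, i), append(t, j)) = (∏_{m = 0}^{p-1} (n - k - m)) · δ(i, j), where append(t, i) : Fin (p + k) → Fin n is the concatenation of t and i, the product of the factors n - k - m is computed in ℤ, and the identity holds with no injectivity assumptions on i or j. -/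
/-- The generalized Kronecker delta: the determinant of the `m × m` integer
matrix whose `(a, b)` entry is `1` if `i a = j b` and `0` otherwise. -/
def gKronecker {n m : ℕ} (i j : Fin m → Fin n) : ℤ :=
  Matrix.det (Matrix.of fun a b => if i a = j b then (1 : ℤ) else 0)

lemma gKronecker_cast {n m m' : ℕ} (h : m' = m) (i j : Fin m → Fin n) :
    gKronecker (i ∘ Fin.cast h) (j ∘ Fin.cast h) = gKronecker i j := by
  unfold gKronecker
  have : (Matrix.of fun a b => if (i ∘ Fin.cast h) a = (j ∘ Fin.cast h) b then (1 : ℤ) else 0)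
      = (Matrix.of fun a b => if i a = j b then (1 : ℤ) else 0).submatrix
        (finCongr h) (finCongr h) := rfl
  rw [this, Matrix.det_submatrix_equiv_self]

lemma gKronecker_single_contraction {n k : ℕ} (i j : Fin k → Fin n) :
    ∑ t : Fin n, gKronecker (Fin.cons t i) (Fin.cons t j)
      = ((n : ℤ) - k) * gKronecker i j := by
  set N : Matrix (Fin k) (Fin k) ℤ := Matrix.of fun a b => if i a = j b then (1 : ℤ) else 0 with hN
  set M : Fin n → Matrix (Fin (k+1)) (Fin (k+1)) ℤ :=
    fun t => Matrix.of fun a b =>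
      if (Fin.cons t i : Fin (k+1) → Fin n) a = (Fin.cons t j : Fin (k+1) → Fin n) b
      then (1 : ℤ) else 0 with hM
  have hgk : gKronecker i j = N.det := rfl
  have hdet : ∀ t : Fin n, gKronecker (Fin.cons t i) (Fin.cons t j)
      = ∑ b : Fin (k+1), (-1 : ℤ) ^ (b : ℕ) * (M t) 0 b *
          ((M t).submatrix Fin.succ b.succAbove).det :=
    fun t => Matrix.det_succ_row_zero (M t)
  -- the b = 0 submatrix is N
  have hsub0 : ∀ t : Fin n, ((M t).submatrix Fin.succ (0 : Fin (k+1)).succAbove) = N := by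
    intro t
    ext a c
    simp [hM, hN, Fin.succAbove, Fin.cons_succ]
  have hM00 : ∀ t : Fin n, (M t) 0 0 = 1 := by
    intro t; simp [hM]
  have hMb : ∀ (t : Fin n) (b' : Fin k), (M t) 0 b'.succ = if t = j b' then 1 else 0 := by
    intro t b'; simp [hM]
  -- the submatrix at t = j b' has det (-1)^b' * N.det
  have hsubS : ∀ b' : Fin k,
      (((M (j b')).submatrix Fin.succ b'.succ.succAbove).submatrix id b'.cycleRange) = N := by
    intro b'
    ext a c
    simp only [Matrix.submatrix_apply, hM, Matrix.of_apply, id_eq, Fin.cons_succ,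
      Fin.succAbove_cycleRange, hN]
    rcases eq_or_ne c b' with rfl | hc
    · rw [Equiv.swap_apply_right]
      simp
    · rw [Equiv.swap_apply_of_ne_of_ne (Fin.succ_ne_zero c)
        (by simpa using (Fin.succ_injective _).ne hc)]
      simp
  have hdetS : ∀ b' : Fin k,
      ((M (j b')).submatrix Fin.succ b'.succ.succAbove).det = (-1 : ℤ) ^ (b' : ℕ) * N.det := by
    intro b'
    have h1 : (-1 : ℤ) ^ (b' : ℕ) * (-1) ^ (b' : ℕ) = 1 := by
      rw [← pow_add, ← two_mul, pow_mul]
      norm_num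
    have h := Matrix.det_permute' b'.cycleRange ((M (j b')).submatrix Fin.succ b'.succ.succAbove)
    rw [hsubS b', Fin.sign_cycleRange] at h
    simp only [Units.val_pow_eq_pow_val, Units.val_neg, Units.val_one, Int.cast_pow,
      Int.cast_neg, Int.cast_one, Int.cast_id] at h
    linear_combination (-(-1 : ℤ) ^ (b' : ℕ)) * h
      - ((M (j b')).submatrix Fin.succ b'.succ.succAbove).det * h1
  calc ∑ t : Fin n, gKronecker (Fin.cons t i) (Fin.cons t j)
      = ∑ t : Fin n, (N.det + ∑ b' : Fin k,
          (if t = j b' then 1 else 0) * ((-1 : ℤ) ^ ((b'.succ : Fin (k+1)) : ℕ) *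
            ((M t).submatrix Fin.succ b'.succ.succAbove).det)) := by
        refine Finset.sum_congr rfl fun t _ => ?_
        rw [hdet t, Fin.sum_univ_succ, hsub0 t, hM00 t]
        simp only [Fin.val_zero, pow_zero, one_mul, mul_one]
        congr 1
        refine Finset.sum_congr rfl fun b' _ => ?_
        rw [hMb t b']
        ring
    _ = (n : ℤ) * N.det + ∑ b' : Fin k, ∑ t : Fin n,
          (if t = j b' then 1 else 0) * ((-1 : ℤ) ^ ((b'.succ : Fin (k+1)) : ℕ) *
            ((M t).submatrix Fin.succ b'.succ.succAbove).det) := by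
        rw [Finset.sum_add_distrib, Finset.sum_const, Finset.sum_comm]
        simp [nsmul_eq_mul]
    _ = (n : ℤ) * N.det + ∑ b' : Fin k, (-1 : ℤ) * N.det := by
        congr 1
        refine Finset.sum_congr rfl fun b' _ => ?_
        simp only [ite_mul, one_mul, zero_mul]
        rw [Finset.sum_ite_eq' Finset.univ (j b')]
        simp only [Finset.mem_univ, if_true]
        rw [hdetS b', Fin.val_succ, pow_succ]
        have h1 : (-1 : ℤ) ^ (b' : ℕ) * (-1) ^ (b' : ℕ) = 1 := by
          rw [← pow_add, ← two_mul, pow_mul]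
          norm_num
        linear_combination (-N.det) * h1
    _ = ((n : ℤ) - k) * N.det := by
        rw [Finset.sum_const]
        simp [nsmul_eq_mul]
        ring

theorem gKronecker_p_fold_contraction (n k p : ℕ) (i j : Fin k → Fin n) :
    ∑ t : Fin p → Fin n, gKronecker (Fin.append t i) (Fin.append t j)
      = (∏ m ∈ Finset.range p, ((n : ℤ) - k - m)) * gKronecker i j := by
  induction p with
  | zero =>
    rw [Fintype.sum_subsingleton _ (Fin.elim0 : Fin 0 → Fin n)]
    rw [Fin.elim0_append, Fin.elim0_append, gKronecker_cast]
    simp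
  | succ p ih =>
    rw [← Equiv.sum_comp (Fin.consEquiv (fun _ : Fin (p+1) => Fin n))]
    rw [Fintype.sum_prod_type]
    simp only [Fin.consEquiv, Equiv.coe_fn_mk]
    have key : ∀ (t0 : Fin n) (t' : Fin p → Fin n),
        gKronecker (Fin.append (Fin.cons t0 t') i) (Fin.append (Fin.cons t0 t') j)
          = gKronecker (Fin.cons t0 (Fin.append t' i)) (Fin.cons t0 (Fin.append t' j)) := by
      intro t0 t'
      rw [Fin.append_cons, Fin.append_cons, gKronecker_cast]
    simp only [key]
    rw [Finset.sum_comm]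
    have : ∀ t' : Fin p → Fin n,
        ∑ t0 : Fin n, gKronecker (Fin.cons t0 (Fin.append t' i)) (Fin.cons t0 (Fin.append t' j))
          = ((n : ℤ) - (p + k)) * gKronecker (Fin.append t' i) (Fin.append t' j) := by
      intro t'
      rw [gKronecker_single_contraction]
      push_cast
      ring_nf
    simp only [this]
    rw [← Finset.mul_sum, ih, Finset.prod_range_succ]
    ring
end

section
/- Fix natural numbers n, k, p. For tuples i, j : Fin m → Fin n, let δ(i, j) denote the determinant of the m×m integer matrix whose (a, b) entry is 1 if i(a) = j(b) and 0 otherwise. Then for all i, j : Fin k → Fin n: ∑_{s : Fin p → Fin n} ∑_{t : Fin p → Fin n} δ(s, t) · δ(append(t, i), append(s, j)) = p! · (∏_{m = 0}^{p-1} (n - k - m)) · δ(i, j), where append denotes concatenation of tuples, the coefficient is computed in ℤ, and the identity holds with no injectivity assumptions. -/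
open Finset Equiv Matrix in
lemma gK_cast {n m1 m2 : ℕ} (h : m1 = m2) (u v : Fin m2 → Fin n) :
    gKronecker (u ∘ Fin.cast h) (v ∘ Fin.cast h) = gKronecker u v := by
  subst h; rfl


open Finset Equiv Matrix in
lemma det_add_rank_one {M : ℕ} (A : Matrix (Fin M) (Fin M) ℤ) (c w : Fin M → ℤ) :
    Matrix.det (Matrix.of fun a b => A a b + c a * w b)
      = A.det + ∑ a, c a * (A.updateRow a w).det := by
  have h0 : Matrix.det (Matrix.of fun a b => A a b + c a * w b)
      = (Matrix.detRowAlternating :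
          (Fin M → ℤ) [⋀^Fin M]→ₗ[ℤ] ℤ).toMultilinearMap ((fun a => c a • w) + fun a => A a) := by
    congr 1
    funext a b
    simp [add_comm, mul_comm]
  rw [h0, MultilinearMap.map_add_univ]
  have hval : ∀ s : Finset (Fin M),
      (Matrix.detRowAlternating :
          (Fin M → ℤ) [⋀^Fin M]→ₗ[ℤ] ℤ).toMultilinearMap (s.piecewise (fun a => c a • w) (fun a => A a))
        = (if s = ∅ then A.det else 0)
          + ∑ a : Fin M, if s = {a} then c a * (A.updateRow a w).det else 0 := by
    intro s
    rcases Nat.lt_or_ge s.card 1 with hc | hc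
    · -- s = ∅
      have hs : s = ∅ := Finset.card_eq_zero.mp (Nat.lt_one_iff.mp hc)
      subst hs
      rw [Finset.piecewise_empty, if_pos rfl,
        Finset.sum_eq_zero (fun a _ => if_neg fun h => (Finset.singleton_ne_empty a) h.symm),
        add_zero]
      rfl
    · rcases Nat.lt_or_ge s.card 2 with hc2 | hc2
      · -- s = {a0}
        have h1 : s.card = 1 := le_antisymm (Nat.lt_succ_iff.mp hc2) hc
        obtain ⟨a0, rfl⟩ := Finset.card_eq_one.mp h1
        have hp : ({a0} : Finset (Fin M)).piecewise (fun a => c a • w) (fun a => A a)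
            = A.updateRow a0 (c a0 • w) := by
          funext x
          by_cases hx : x = a0
          · subst hx; simp [Finset.piecewise_singleton]
          · simp [Finset.piecewise_singleton, Function.update_of_ne hx,
              Matrix.updateRow_ne hx]
        rw [hp]
        show (A.updateRow a0 (c a0 • w)).det = _
        rw [Matrix.det_updateRow_smul, if_neg (Finset.singleton_ne_empty a0)]
        simp only [Finset.singleton_inj, smul_eq_mul]
        rw [Finset.sum_ite_eq]
        simp
      · -- card ≥ 2 : det is zero
        obtain ⟨a, ha, b, hb, hab⟩ := Finset.one_lt_card.mp hc2
        set P : Matrix (Fin M) (Fin M) ℤ := fun x => s.piecewise (fun a => c a • w) (fun a => A a) x with hP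
        have hPa : P a = c a • w := by simp [hP, Finset.piecewise_eq_of_mem _ _ _ ha]
        have hPb : P b = c b • w := by simp [hP, Finset.piecewise_eq_of_mem _ _ _ hb]
        have key : P.det = 0 := by
          have e1 : P = P.updateRow a (c a • w) := by rw [← hPa, Matrix.updateRow_eq_self]
          rw [e1, Matrix.det_updateRow_smul]
          have e2 : (P.updateRow a w).det = 0 := by
            have hrb : (P.updateRow a w) b = c b • w := by
              rw [Matrix.updateRow_ne (Ne.symm hab)]; exact hPb
            have e3 : P.updateRow a w = (P.updateRow a w).updateRow b (c b • w) := by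
              rw [← hrb, Matrix.updateRow_eq_self]
            rw [e3, Matrix.det_updateRow_smul]
            have : (((P.updateRow a w).updateRow b w)).det = 0 := by
              apply Matrix.det_zero_of_row_eq hab
              rw [Matrix.updateRow_ne hab, Matrix.updateRow_self, Matrix.updateRow_self]
            rw [this, mul_zero]
          rw [e2, mul_zero]
        have : (Matrix.detRowAlternating :
            (Fin M → ℤ) [⋀^Fin M]→ₗ[ℤ] ℤ).toMultilinearMap
              (s.piecewise (fun a => c a • w) (fun a => A a)) = P.det := rfl
        rw [this, key]
        have hne : (s = ∅) = False := by
          simp only [eq_iff_iff, iff_false]; intro h; rw [h] at hc2; simp at hc2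
        have hne2 : ∀ x : Fin M, (s = {x}) = False := by
          intro x
          simp only [eq_iff_iff, iff_false]; intro h; rw [h] at hc2; simp at hc2
        simp [hne, hne2]
  rw [Finset.sum_congr rfl fun s _ => hval s]
  rw [Finset.sum_add_distrib]
  congr 1
  · rw [Finset.sum_eq_single (∅ : Finset (Fin M)) (fun b _ hb => if_neg hb)
      (fun h => absurd (Finset.mem_univ _) h), if_pos rfl]
  · rw [Finset.sum_comm]
    refine Finset.sum_congr rfl fun a _ => ?_
    rw [Finset.sum_eq_single ({a} : Finset (Fin M)) (fun b _ hb => if_neg hb)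
      (fun h => absurd (Finset.mem_univ _) h), if_pos rfl]

@[simps]
def consSumEquiv (M : ℕ) : (Unit ⊕ Fin M) ≃ Fin (M + 1) where
  toFun := Sum.elim (fun _ => 0) Fin.succ
  invFun := fun x => Fin.cases (Sum.inl ()) Sum.inr x
  left_inv := by rintro (x | x) <;> simp
  right_inv := by
    intro x
    induction x using Fin.cases <;> simp

open Finset Equiv Matrix in
lemma sum_gK_cons {n M : ℕ} (u v : Fin M → Fin n) :
    ∑ c : Fin n, gKronecker (Fin.cons c u) (Fin.cons c v)
      = ((n : ℤ) - M) * gKronecker u v := by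
  classical
  set B : Matrix (Fin M) (Fin M) ℤ := Matrix.of fun a b => if u a = v b then (1 : ℤ) else 0
    with hB
  have step : ∀ c : Fin n, gKronecker (Fin.cons c u) (Fin.cons c v)
      = B.det + ∑ a, (-(if u a = c then (1 : ℤ) else 0)) *
          (B.updateRow a fun b => if c = v b then (1 : ℤ) else 0).det := by
    intro c
    have h1 : gKronecker (Fin.cons c u) (Fin.cons c v)
        = Matrix.det ((Matrix.of fun (a b : Fin (M + 1)) =>
            if (Fin.cons c u : Fin (M+1) → Fin n) a = (Fin.cons c v : Fin (M+1) → Fin n) b then (1 : ℤ) else 0).submatrix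
              (consSumEquiv M) (consSumEquiv M)) :=
      (Matrix.det_submatrix_equiv_self (consSumEquiv M) _).symm
    have h2 : (Matrix.of fun (a b : Fin (M + 1)) =>
            if (Fin.cons c u : Fin (M+1) → Fin n) a = (Fin.cons c v : Fin (M+1) → Fin n) b then (1 : ℤ) else 0).submatrix
              (consSumEquiv M) (consSumEquiv M)
        = Matrix.fromBlocks (1 : Matrix Unit Unit ℤ)
            (Matrix.of fun (_ : Unit) b => if c = v b then (1 : ℤ) else 0)
            (Matrix.of fun a (_ : Unit) => if u a = c then (1 : ℤ) else 0) B := by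
      ext x y
      rcases x with x | x <;> rcases y with y | y <;>
        simp [Matrix.fromBlocks, Matrix.one_apply, hB]
    have h3 : (B - (Matrix.of fun a (_ : Unit) => if u a = c then (1 : ℤ) else 0) *
          (Matrix.of fun (_ : Unit) b => if c = v b then (1 : ℤ) else 0))
        = Matrix.of fun a b => B a b
            + (-(if u a = c then (1 : ℤ) else 0)) * (if c = v b then (1 : ℤ) else 0) := by
      ext a b
      simp [Matrix.mul_apply, Matrix.sub_apply]
      split_ifs <;> ring
    rw [h1, h2, Matrix.det_fromBlocks_one₁₁, h3, det_add_rank_one]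
  rw [Finset.sum_congr rfl fun c _ => step c]
  rw [Finset.sum_add_distrib, Finset.sum_const, Finset.card_univ, Fintype.card_fin]
  rw [Finset.sum_comm]
  have hinner : ∀ a : Fin M,
      (∑ c : Fin n, (-(if u a = c then (1 : ℤ) else 0)) *
        (B.updateRow a fun b => if c = v b then (1 : ℤ) else 0).det) = -B.det := by
    intro a
    have : ∀ c : Fin n, (-(if u a = c then (1 : ℤ) else 0)) *
        (B.updateRow a fun b => if c = v b then (1 : ℤ) else 0).det
        = (if u a = c then
            -(B.updateRow a fun b => if c = v b then (1 : ℤ) else 0).det else 0) := by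
      intro c
      split_ifs <;> ring
    rw [Finset.sum_congr rfl fun c _ => this c, Finset.sum_ite_eq, if_pos (Finset.mem_univ _)]
    have hrow : (fun b => if u a = v b then (1 : ℤ) else 0) = B a := rfl
    rw [hrow, Matrix.updateRow_eq_self]
  rw [Finset.sum_congr rfl fun a _ => hinner a, Finset.sum_const, Finset.card_univ,
    Fintype.card_fin]
  have : gKronecker u v = B.det := rfl
  rw [this]
  ring

open Finset Equiv Matrix in
lemma sum_gK_append (n k : ℕ) (i j : Fin k → Fin n) (p : ℕ) :
    ∑ s : Fin p → Fin n, gKronecker (Fin.append s i) (Fin.append s j)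
      = (∏ m ∈ Finset.range p, ((n : ℤ) - k - m)) * gKronecker i j := by
  induction p with
  | zero =>
    have hap : ∀ s : Fin 0 → Fin n, ∀ w : Fin k → Fin n,
        Fin.append s w = w ∘ Fin.cast (Nat.zero_add k) := by
      intro s w
      have hs : s = Fin.elim0 := funext fun x => x.elim0
      rw [hs, Fin.elim0_append]
    rw [Finset.sum_congr rfl fun s _ => by rw [hap s i, hap s j, gK_cast]]
    rw [Finset.sum_const, Finset.card_univ]
    simp
  | succ p ih =>
    rw [← Equiv.sum_comp (Fin.consEquiv (fun _ : Fin (p + 1) => Fin n))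
      (fun s => gKronecker (Fin.append s i) (Fin.append s j)), Fintype.sum_prod_type,
      Finset.sum_comm]
    have step : ∀ s' : Fin p → Fin n, ∀ c : Fin n,
        gKronecker (Fin.append (Fin.cons c s') i) (Fin.append (Fin.cons c s') j)
          = gKronecker (Fin.cons c (Fin.append s' i)) (Fin.cons c (Fin.append s' j)) := by
      intro s' c
      rw [Fin.append_cons, Fin.append_cons, gK_cast]
    have step2 : ∀ s' : Fin p → Fin n,
        (∑ c : Fin n, gKronecker (Fin.append (Fin.cons c s') i)
            (Fin.append (Fin.cons c s') j))
          = ((n : ℤ) - (p + k : ℕ)) * gKronecker (Fin.append s' i) (Fin.append s' j) := by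
      intro s'
      rw [Finset.sum_congr rfl fun c _ => step s' c, sum_gK_cons]
    calc (∑ s' : Fin p → Fin n, ∑ c : Fin n,
            gKronecker (Fin.append ((Fin.consEquiv fun _ => Fin n) (c, s')) i)
              (Fin.append ((Fin.consEquiv fun _ => Fin n) (c, s')) j))
        = ∑ s' : Fin p → Fin n, ((n : ℤ) - (p + k : ℕ)) *
            gKronecker (Fin.append s' i) (Fin.append s' j) := by
          refine Finset.sum_congr rfl fun s' _ => ?_
          rw [← step2 s']
          refine Finset.sum_congr rfl fun c _ => ?_
          congr 1
      _ = ((n : ℤ) - (p + k : ℕ)) *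
            ((∏ m ∈ Finset.range p, ((n : ℤ) - k - m)) * gKronecker i j) := by
          rw [← Finset.mul_sum, ih]
      _ = _ := by
          rw [Finset.prod_range_succ]
          push_cast
          ring

open Finset Equiv Matrix in
lemma gK_perm {n m : ℕ} (σ : Equiv.Perm (Fin m)) (u v : Fin m → Fin n) :
    gKronecker (u ∘ σ) v = ((Equiv.Perm.sign σ : ℤˣ) : ℤ) * gKronecker u v := by
  exact Matrix.det_permute σ (Matrix.of fun a b => if u a = v b then (1 : ℤ) else 0)

open Finset Equiv Matrix in
lemma append_comp_perm {α : Type*} {p k : ℕ} (σ : Equiv.Perm (Fin p)) (s : Fin p → α)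
    (i : Fin k → α) :
    Fin.append (s ∘ σ) i
      = (Fin.append s i) ∘ (finSumFinEquiv.permCongr (σ.sumCongr (Equiv.refl (Fin k)))) := by
  funext x
  obtain ⟨y, rfl⟩ := finSumFinEquiv.surjective x
  cases y with
  | inl a => simp [Equiv.permCongr_apply, Fin.append_left]
  | inr b => simp [Equiv.permCongr_apply, Fin.append_right]

open Finset Equiv Matrix in
lemma prod_ite_eq_ite {p n : ℕ} (a b : Fin p → Fin n) :
    (∏ x : Fin p, if a x = b x then (1 : ℤ) else 0) = if a = b then 1 else 0 := by
  split_ifs with h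
  · exact Finset.prod_eq_one fun x _ => by rw [h, if_pos rfl]
  · obtain ⟨x, hx⟩ := Function.ne_iff.mp h
    exact Finset.prod_eq_zero (Finset.mem_univ x) (if_neg hx)

open Finset Equiv Matrix in
lemma sum_gK_pair {n k p : ℕ} (i j : Fin k → Fin n) (s : Fin p → Fin n) :
    ∑ t : Fin p → Fin n, gKronecker s t * gKronecker (Fin.append t i) (Fin.append s j)
      = (p.factorial : ℤ) * gKronecker (Fin.append s i) (Fin.append s j) := by
  classical
  have hdet : ∀ t : Fin p → Fin n, gKronecker s t
      = ∑ σ : Equiv.Perm (Fin p), ((Equiv.Perm.sign σ : ℤˣ) : ℤ) *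
          ∏ b : Fin p, if s (σ b) = t b then (1 : ℤ) else 0 := by
    intro t
    exact Matrix.det_apply' _
  calc ∑ t : Fin p → Fin n, gKronecker s t * gKronecker (Fin.append t i) (Fin.append s j)
      = ∑ t : Fin p → Fin n, ∑ σ : Equiv.Perm (Fin p),
          ((Equiv.Perm.sign σ : ℤˣ) : ℤ) * ((if s ∘ σ = t then (1:ℤ) else 0) *
            gKronecker (Fin.append t i) (Fin.append s j)) := by
        refine Finset.sum_congr rfl fun t _ => ?_
        rw [hdet t, Finset.sum_mul]
        refine Finset.sum_congr rfl fun σ _ => ?_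
        rw [mul_assoc]
        congr 2
        exact prod_ite_eq_ite (s ∘ σ) t
    _ = ∑ σ : Equiv.Perm (Fin p), ((Equiv.Perm.sign σ : ℤˣ) : ℤ) *
          gKronecker (Fin.append (s ∘ σ) i) (Fin.append s j) := by
        rw [Finset.sum_comm]
        refine Finset.sum_congr rfl fun σ _ => ?_
        rw [← Finset.mul_sum]
        congr 1
        simp only [ite_mul, one_mul, zero_mul]
        rw [Finset.sum_ite_eq, if_pos (Finset.mem_univ _)]
    _ = ∑ σ : Equiv.Perm (Fin p), (1 : ℤ) *
          gKronecker (Fin.append s i) (Fin.append s j) := by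
        refine Finset.sum_congr rfl fun σ _ => ?_
        rw [append_comp_perm, gK_perm, ← mul_assoc]
        congr 1
        rw [Equiv.Perm.sign_permCongr, Equiv.Perm.sign_sumCongr, Equiv.Perm.sign_refl, mul_one]
        rw [← Units.val_mul, Int.units_mul_self, Units.val_one]
    _ = _ := by
        simp only [one_mul]
        rw [Finset.sum_const, Finset.card_univ, Fintype.card_perm, Fintype.card_fin,
          nsmul_eq_mul]

theorem gKronecker_pair_contraction (n k p : ℕ) (i j : Fin k → Fin n) :
    ∑ s : Fin p → Fin n, ∑ t : Fin p → Fin n,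
        gKronecker s t * gKronecker (Fin.append t i) (Fin.append s j)
      = (p.factorial : ℤ) * (∏ m ∈ Finset.range p, ((n : ℤ) - k - m)) *
        gKronecker i j := by
  calc ∑ s : Fin p → Fin n, ∑ t : Fin p → Fin n,
        gKronecker s t * gKronecker (Fin.append t i) (Fin.append s j)
      = ∑ s : Fin p → Fin n,
          (p.factorial : ℤ) * gKronecker (Fin.append s i) (Fin.append s j) := by
        exact Finset.sum_congr rfl fun s _ => sum_gK_pair i j s
    _ = (p.factorial : ℤ) * ∑ s : Fin p → Fin n,
          gKronecker (Fin.append s i) (Fin.append s j) := by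
        rw [Finset.mul_sum]
    _ = _ := by rw [sum_gK_append, mul_assoc]
end
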